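/- Let G* = (V*, E*) be a finite simple graph with n vertices and m edges, let k be a nonnegative integer, and let q ≥ 2m + 1. Let G be the graph obtained from G* by adding q new vertices x_1, …, x_q and joining each x_i to every vertex of V* by an edge (with no edges among the new vertices). Then G* has a vertex clique cover with at most k cliques if and only if G has an edge clique cover 𝒞 = (C_1, …, C_r) with Σ_{l=1}^{r} |C_l| ≤ (n+k)q + 2m. -/

import Mathlib

/-- An edge clique cover of a simple graph `G`: a finite indexed family of cliques
such that every edge of `G` has both endpoints in some member of the family. -/
def IsEdgeCliqueCover {V : Type*} (G : SimpleGraph V) {k : ℕ} (C : Fin k → Finset V) : Prop :=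
  (∀ l, G.IsClique (C l : Set V)) ∧ ∀ ⦃x y : V⦄, G.Adj x y → ∃ l, x ∈ C l ∧ y ∈ C l

/-- A vertex clique cover of a simple graph `G` with at most `k` cliques: a family of `k`
(possibly empty) cliques of `G` whose union is the whole vertex set. -/
def IsVertexCliqueCover {V : Type*} (G : SimpleGraph V) {k : ℕ} (D : Fin k → Finset V) : Prop :=
  (∀ l, G.IsClique (D l : Set V)) ∧ ∀ v : V, ∃ l, v ∈ D l

/-- The graph obtained from `G` by adding `q` new vertices `x_1, …, x_q`, joining each
new vertex to every original vertex, with no edges among the new vertices. -/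
def addUniversalVertices {V : Type*} (G : SimpleGraph V) (q : ℕ) :
    SimpleGraph (V ⊕ Fin q) :=
  SimpleGraph.fromRel (fun u v =>
    match u, v with
    | Sum.inl a, Sum.inl b => G.Adj a b
    | Sum.inl _, Sum.inr _ => True
    | _, _ => False)

section helpers
variable {V : Type*} {G : SimpleGraph V} {q : ℕ}

lemma auv_adj_inl_inl {a b : V} :
    (addUniversalVertices G q).Adj (Sum.inl a) (Sum.inl b) ↔ G.Adj a b := by
  rw [addUniversalVertices, SimpleGraph.fromRel_adj]
  constructor
  · rintro ⟨_, h | h⟩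
    · exact h
    · exact h.symm
  · exact fun h => ⟨fun e => G.irrefl (Sum.inl_injective e ▸ h), Or.inl h⟩

lemma auv_adj_inl_inr {a : V} {i : Fin q} :
    (addUniversalVertices G q).Adj (Sum.inl a) (Sum.inr i) := by
  rw [addUniversalVertices, SimpleGraph.fromRel_adj]
  exact ⟨Sum.inl_ne_inr, Or.inl trivial⟩

lemma auv_not_adj_inr_inr {i j : Fin q} :
    ¬ (addUniversalVertices G q).Adj (Sum.inr i) (Sum.inr j) := by
  rw [addUniversalVertices, SimpleGraph.fromRel_adj]
  rintro ⟨_, h | h⟩ <;> exact h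

end helpers

/-- The Kou–Stockmeyer–Wong style reduction underlying NP-completeness of Assignment
Clique Cover: let `G*` be a finite simple graph with `n` vertices and `m` edges, let `k`
be a nonnegative integer and `q ≥ 2m + 1`, and let `G` be obtained from `G*` by adding `q`
new vertices joined to every vertex of `G*`. Then `G*` has a vertex clique cover with at
most `k` cliques iff `G` has an edge clique cover `(C_1, …, C_r)` with
`Σ_l |C_l| ≤ (n + k)q + 2m`. -/
theorem vertexCliqueCover_iff_assignment_bound {V : Type*} [Fintype V] [DecidableEq V]
    (G : SimpleGraph V) [DecidableRel G.Adj] (k q : ℕ)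
    (hq : 2 * G.edgeFinset.card + 1 ≤ q) :
    (∃ D : Fin k → Finset V, IsVertexCliqueCover G D) ↔
      (∃ (r : ℕ) (C : Fin r → Finset (V ⊕ Fin q)),
        IsEdgeCliqueCover (addUniversalVertices G q) C ∧
        ∑ l, (C l).card ≤ (Fintype.card V + k) * q + 2 * G.edgeFinset.card) := by
  set n := Fintype.card V with hn
  set m := G.edgeFinset.card with hm
  constructor
  · rintro ⟨D, hDclique, hDcover⟩
    choose f hf using hDcover
    set D' : Fin k → Finset V := fun l => Finset.univ.filter (fun v => f v = l) with hD'
    have hsub : ∀ l, D' l ⊆ D l := by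
      intro l v hv
      rw [hD', Finset.mem_filter] at hv
      exact hv.2 ▸ hf v
    have hsum' : ∑ l, (D' l).card = n := by
      exact (Finset.card_eq_sum_card_fiberwise (fun v _ => Finset.mem_univ (f v))).symm
    -- edge enumeration
    set eq := G.edgeFinset.equivFin with heq
    set emb : V ↪ (V ⊕ Fin q) := ⟨Sum.inl, Sum.inl_injective⟩ with hemb
    set edgeClique : Fin m → Finset (V ⊕ Fin q) := fun j =>
      (Finset.univ.filter (fun v => v ∈ (eq.symm j : Sym2 V))).map emb with hEC
    set bigClique : Fin q × Fin k → Finset (V ⊕ Fin q) := fun p =>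
      insert (Sum.inr p.1) ((D' p.2).map emb) with hBC
    set F : (Fin q × Fin k) ⊕ Fin m → Finset (V ⊕ Fin q) := Sum.elim bigClique edgeClique with hF
    set ee : (Fin q × Fin k) ⊕ Fin m ≃ Fin (q * k + m) :=
      (finProdFinEquiv.sumCongr (Equiv.refl (Fin m))).trans finSumFinEquiv with hee
    refine ⟨q * k + m, fun l => F (ee.symm l), ⟨?_, ?_⟩, ?_⟩
    · -- cliques
      intro l
      obtain ⟨x, rfl⟩ := ee.surjective l
      simp only [Equiv.symm_apply_apply]
      rcases x with p | j
      · intro u hu v hv huv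
        rw [Finset.mem_coe, hF] at hu hv
        simp only [Sum.elim_inl, hBC, Finset.mem_insert, Finset.mem_map] at hu hv
        rcases hu with rfl | ⟨a, ha, rfl⟩ <;> rcases hv with rfl | ⟨b, hb, rfl⟩
        · exact absurd rfl huv
        · exact (auv_adj_inl_inr).symm
        · exact auv_adj_inl_inr
        · refine auv_adj_inl_inl.mpr (hDclique p.2 (hsub _ ha) (hsub _ hb) ?_)
          exact fun e => huv (congrArg Sum.inl e)
      · intro u hu v hv huv
        rw [Finset.mem_coe, hF] at hu hv
        simp only [Sum.elim_inr, hEC, Finset.mem_map, Finset.mem_filter] at hu hv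
        obtain ⟨a, ⟨-, ha⟩, rfl⟩ := hu
        obtain ⟨b, ⟨-, hb⟩, rfl⟩ := hv
        have hab : a ≠ b := fun e => huv (congrArg Sum.inl e)
        have : (eq.symm j : Sym2 V) = s(a, b) := (Sym2.mem_and_mem_iff hab).mp ⟨ha, hb⟩
        have hmem : s(a, b) ∈ G.edgeFinset := this ▸ (eq.symm j).2
        exact auv_adj_inl_inl.mpr (SimpleGraph.mem_edgeFinset.mp hmem)
    · -- coverage
      rintro (a | i) (b | i') hadj
      · have hab : G.Adj a b := auv_adj_inl_inl.mp hadj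
        have hmem : s(a, b) ∈ G.edgeFinset := SimpleGraph.mem_edgeFinset.mpr hab
        refine ⟨ee (Sum.inr (eq ⟨_, hmem⟩)), ?_⟩
        simp only [Equiv.symm_apply_apply]
        have hAB : ∀ c ∈ s(a,b), Sum.inl c ∈ F (Sum.inr (eq ⟨_, hmem⟩)) := by
          intro c hc
          simp only [hF, Sum.elim_inr, hEC, Finset.mem_map, Finset.mem_filter]
          refine ⟨c, ⟨Finset.mem_univ c, ?_⟩, rfl⟩
          rw [Equiv.symm_apply_apply]
          exact hc
        exact ⟨hAB a (Sym2.mem_mk_left a b), hAB b (Sym2.mem_mk_right a b)⟩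
      · refine ⟨ee (Sum.inl (i', f a)), ?_⟩
        simp only [Equiv.symm_apply_apply]
        simp only [hF, Sum.elim_inl, hBC, Finset.mem_insert, Finset.mem_map]
        exact ⟨Or.inr ⟨a, by rw [hD', Finset.mem_filter]; exact ⟨Finset.mem_univ a, rfl⟩, rfl⟩, Or.inl trivial⟩
      · refine ⟨ee (Sum.inl (i, f b)), ?_⟩
        simp only [Equiv.symm_apply_apply]
        simp only [hF, Sum.elim_inl, hBC, Finset.mem_insert, Finset.mem_map]
        exact ⟨Or.inl trivial, Or.inr ⟨b, by rw [hD', Finset.mem_filter]; exact ⟨Finset.mem_univ b, rfl⟩, rfl⟩⟩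
      · exact absurd hadj auv_not_adj_inr_inr
    · -- sum bound
      have hsum : ∑ l, (F (ee.symm l)).card = ∑ x, (F x).card :=
        Equiv.sum_comp ee.symm (fun x => (F x).card)
      rw [hsum, Fintype.sum_sum_type]
      have h1 : ∑ p : Fin q × Fin k, (bigClique p).card = (n + k) * q := by
        have hcard : ∀ p : Fin q × Fin k, (bigClique p).card = (D' p.2).card + 1 := by
          intro p
          rw [hBC]
          rw [Finset.card_insert_of_notMem, Finset.card_map]
          simp [hemb]
        simp only [hcard]
        rw [Fintype.sum_prod_type]
        simp only [Finset.sum_add_distrib, hsum']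
        simp [Finset.sum_const, mul_comm, add_comm]
        ring
      have h2 : ∑ j : Fin m, (edgeClique j).card ≤ 2 * m := by
        have : ∀ j, (edgeClique j).card ≤ 2 := by
          intro j
          rw [hEC, Finset.card_map]
          induction (eq.symm j : Sym2 V) using Sym2.ind with
          | _ x y =>
            refine le_trans (Finset.card_le_card (fun c hc => ?_)) (Finset.card_insert_le x {y} |>.trans (by simp))
            rw [Finset.mem_filter] at hc
            rcases Sym2.mem_iff.mp hc.2 with rfl | rfl
            · exact Finset.mem_insert_self _ _
            · exact Finset.mem_insert_of_mem (Finset.mem_singleton_self _)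
        calc ∑ j : Fin m, (edgeClique j).card ≤ ∑ _j : Fin m, 2 :=
              Finset.sum_le_sum (fun j _ => this j)
          _ = 2 * m := by simp [mul_comm]
      simp only [hF, Sum.elim_inl, Sum.elim_inr]
      omega
  · rintro ⟨r, C, ⟨hclique, hcover⟩, hsum⟩
    have hq1 : 1 ≤ q := le_trans (Nat.le_add_left 1 _) hq
    set S : Fin q → Finset (Fin r) := fun i => Finset.univ.filter (fun l => Sum.inr i ∈ C l) with hS
    have hdisj : ((Finset.univ : Finset (Fin q)) : Set (Fin q)).PairwiseDisjoint S := by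
      intro i _ i' _ hii'
      refine Finset.disjoint_left.mpr (fun l hl hl' => ?_)
      rw [hS, Finset.mem_filter] at hl hl'
      have := hclique l (Finset.mem_coe.mpr hl.2) (Finset.mem_coe.mpr hl'.2)
        (fun e => hii' (Sum.inr_injective e))
      exact auv_not_adj_inr_inr this
    have hcoverV : ∀ i : Fin q, Finset.univ ⊆ (S i).biUnion (fun l => (C l).toLeft) := by
      intro i v _
      obtain ⟨l, hl1, hl2⟩ := hcover (auv_adj_inl_inr (a := v) (i := i)).symm
      refine Finset.mem_biUnion.mpr ⟨l, ?_, Finset.mem_toLeft.mpr hl2⟩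
      rw [hS, Finset.mem_filter]; exact ⟨Finset.mem_univ l, hl1⟩
    have hlower : ∀ i : Fin q, n + (S i).card ≤ ∑ l ∈ S i, (C l).card := by
      intro i
      have h1 : n ≤ ∑ l ∈ S i, (C l).toLeft.card := by
        calc n = (Finset.univ : Finset V).card := rfl
          _ ≤ ((S i).biUnion (fun l => (C l).toLeft)).card :=
              Finset.card_le_card (hcoverV i)
          _ ≤ ∑ l ∈ S i, (C l).toLeft.card := Finset.card_biUnion_le
      have h2 : ∀ l ∈ S i, (C l).toLeft.card + 1 ≤ (C l).card := by
        intro l hl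
        rw [hS, Finset.mem_filter] at hl
        have h3 := (C l).card_toLeft_add_card_toRight
        have : 1 ≤ (C l).toRight.card := Finset.card_pos.mpr ⟨i, Finset.mem_toRight.mpr hl.2⟩
        omega
      calc n + (S i).card ≤ (∑ l ∈ S i, (C l).toLeft.card) + ∑ _l ∈ S i, 1 := by
            rw [Finset.sum_const, smul_eq_mul, mul_one]; exact Nat.add_le_add_right h1 _
        _ = ∑ l ∈ S i, ((C l).toLeft.card + 1) := (Finset.sum_add_distrib).symm
        _ ≤ ∑ l ∈ S i, (C l).card := Finset.sum_le_sum h2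
    have htotal : q * n + ∑ i : Fin q, (S i).card ≤ (n + k) * q + 2 * m := by
      calc q * n + ∑ i : Fin q, (S i).card = ∑ i : Fin q, (n + (S i).card) := by
            rw [Finset.sum_add_distrib]; simp [mul_comm]
        _ ≤ ∑ i : Fin q, ∑ l ∈ S i, (C l).card := Finset.sum_le_sum (fun i _ => hlower i)
        _ = ∑ l ∈ Finset.univ.biUnion S, (C l).card := (Finset.sum_biUnion hdisj).symm
        _ ≤ ∑ l, (C l).card := Finset.sum_le_sum_of_subset (Finset.subset_univ _)
        _ ≤ (n + k) * q + 2 * m := hsum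
    have hTbound : ∑ i : Fin q, (S i).card ≤ k * q + 2 * m := by
      have : (n + k) * q = q * n + k * q := by ring
      omega
    have hex : ∃ i : Fin q, (S i).card ≤ k := by
      by_contra hcon
      push_neg at hcon
      have : q * (k + 1) ≤ ∑ i : Fin q, (S i).card := by
        calc q * (k + 1) = ∑ _i : Fin q, (k + 1) := by simp [mul_comm]
          _ ≤ ∑ i : Fin q, (S i).card := Finset.sum_le_sum (fun i _ => hcon i)
      have : q * (k+1) = q * k + q := by ring
      have hkq : k * q = q * k := mul_comm k q
      omega
    obtain ⟨i, hti⟩ := hex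
    set e := (S i).equivFin with he
    refine ⟨fun j => if h : (j : ℕ) < (S i).card then (C (e.symm ⟨j, h⟩ : {l // l ∈ S i})).toLeft else ∅,
      ?_, ?_⟩
    · intro j
      dsimp only
      by_cases h : (j : ℕ) < (S i).card
      · rw [dif_pos h]
        intro a ha b hb hab
        rw [Finset.mem_coe, Finset.mem_toLeft] at ha hb
        exact auv_adj_inl_inl.mp (hclique _ ha hb (fun ee => hab (Sum.inl_injective ee)))
      · rw [dif_neg h]
        simp [SimpleGraph.isClique_empty]
    · intro v
      obtain ⟨l, hl1, hl2⟩ := hcover (auv_adj_inl_inr (a := v) (i := i)).symm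
      have hlS : l ∈ S i := by rw [hS, Finset.mem_filter]; exact ⟨Finset.mem_univ l, hl1⟩
      set j0 : Fin (S i).card := e ⟨l, hlS⟩ with hj0
      refine ⟨⟨(j0 : ℕ), lt_of_lt_of_le j0.isLt hti⟩, ?_⟩
      have h : ((⟨(j0 : ℕ), lt_of_lt_of_le j0.isLt hti⟩ : Fin k) : ℕ) < (S i).card := j0.isLt
      dsimp only
      rw [dif_pos h]
      have heq2 : (⟨((⟨(j0 : ℕ), lt_of_lt_of_le j0.isLt hti⟩ : Fin k) : ℕ), h⟩ : Fin (S i).card) = j0 :=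
        Fin.ext rfl
      rw [heq2, hj0, Equiv.symm_apply_apply]
      exact Finset.mem_toLeft.mpr hl2
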